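/- Let k ≥ 1 be an integer. A hypergraph G = (V,E) is a k-map if and only if G is (k,0)-tight. -/
import Mathlib


/-- The number of edges of the multiset `E` spanned by the vertex set `W`. -/
def spanCount {V : Type*} [DecidableEq V] (E : Multiset (Finset V)) (W : Finset V) : ℕ :=
  (E.filter fun e => e ⊆ W).card

/-- A hypergraph with edge multiset `E` is `(k,ℓ)`-sparse if every vertex subset spanning
at least one edge spans at most `k|W| - ℓ` edges. -/
def Sparse {V : Type*} [DecidableEq V] (k l : ℕ) (E : Multiset (Finset V)) : Prop :=
  ∀ W : Finset V, 1 ≤ spanCount E W → spanCount E W + l ≤ k * W.card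

/-- A hypergraph on the finite vertex type `V` is `(k,ℓ)`-tight if it is `(k,ℓ)`-sparse
and has exactly `k|V| - ℓ` edges. -/
def Tight {V : Type*} [Fintype V] [DecidableEq V] (k l : ℕ) (E : Multiset (Finset V)) : Prop :=
  Sparse k l E ∧ Multiset.card E + l = k * Fintype.card V

/-- A map: a hypergraph admitting an orientation (a tail `f v ∈ f v` for each vertex `v`)
whose tail assignment is a bijection from the edge multiset onto the vertex set; i.e.
the edge multiset is exactly the multiset of the edges `f v` over all `v ∈ V`, with
`v ∈ f v` for all `v`. -/
def IsMap {V : Type*} [Fintype V] [DecidableEq V] (E : Multiset (Finset V)) : Prop :=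
  ∃ f : V → Finset V, (∀ v, v ∈ f v) ∧ E = Multiset.map f Finset.univ.val

/-- A `k`-map: a hypergraph whose edge multiset partitions into `k` maps. -/
def IsKMap {V : Type*} [Fintype V] [DecidableEq V] (k : ℕ)
    (E : Multiset (Finset V)) : Prop :=
  ∃ g : Fin k → Multiset (Finset V), (∑ i, g i) = E ∧ ∀ i, IsMap (g i)

/-- Generalized Nash-Williams–Tutte: a hypergraph is a `k`-map iff it is `(k,0)`-tight. -/
theorem stmt_10 {V : Type*} [Fintype V] [DecidableEq V] (k : ℕ) (hk : 1 ≤ k)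
    (E : Multiset (Finset V)) (hne : ∀ e ∈ E, e.Nonempty) :
    IsKMap k E ↔ Tight k 0 E := by
  classical
  constructor
  · rintro ⟨g, hsum, hmap⟩
    choose f hf hfe using hmap
    have hspan : ∀ W : Finset V, spanCount E W = ∑ i, spanCount (g i) W := by
      intro W
      simp only [spanCount, ← Multiset.countP_eq_card_filter]
      rw [← hsum, ← Multiset.coe_countPAddMonoidHom, map_sum]
    have hgi : ∀ (i : Fin k) (W : Finset V), spanCount (g i) W ≤ W.card := by
      intro i W
      rw [spanCount, hfe i, ← Multiset.countP_eq_card_filter, Multiset.countP_map]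
      calc Multiset.card (Multiset.filter (fun v => f i v ⊆ W) Finset.univ.val)
          ≤ Multiset.card (Multiset.filter (fun v => v ∈ W) Finset.univ.val) :=
            Multiset.card_le_card
              (Multiset.monotone_filter_right _ (fun v h => h (hf i v)))
        _ = W.card := by
            rw [← Finset.filter_val, Finset.filter_mem_eq_inter, Finset.univ_inter]
            rfl
    constructor
    · intro W _
      rw [add_zero, hspan]
      calc ∑ i, spanCount (g i) W ≤ ∑ _i : Fin k, W.card :=
            Finset.sum_le_sum fun i _ => hgi i W
        _ = k * W.card := by simp [mul_comm]
    · rw [add_zero, ← hsum]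
      have : ∀ i : Fin k, Multiset.card (g i) = Fintype.card V := by
        intro i; rw [hfe i, Multiset.card_map]; rfl
      rw [show Multiset.card (∑ i : Fin k, g i) = ∑ i : Fin k, Multiset.card (g i) from
        map_sum (⟨⟨Multiset.card, Multiset.card_zero⟩, Multiset.card_add⟩
          : Multiset (Finset V) →+ ℕ) g Finset.univ]
      simp [this, mul_comm]
  · rintro ⟨hsp, hcard⟩
    rw [add_zero] at hcard
    set L := E.toList with hLdef
    have hLE : (L : Multiset (Finset V)) = E := E.coe_toList
    have hlen : L.length = k * Fintype.card V := by
      rw [← Multiset.coe_card, hLE, hcard]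
    have hmapuniv : (Finset.univ.val.map fun j : Fin L.length => L.get j) = E := by
      rw [Fin.univ_val_map]
      rw [show List.ofFn L.get = L from List.ofFn_get L]
      exact hLE
    set t : Fin L.length → Finset (Fin k × V) := fun j => Finset.univ ×ˢ L.get j with ht
    have hall : ∀ s : Finset (Fin L.length), s.card ≤ (s.biUnion t).card := by
      intro s
      rcases s.eq_empty_or_nonempty with rfl | hs
      · simp
      set W := s.biUnion (fun j => L.get j) with hW
      have hb : s.biUnion t = Finset.univ ×ˢ W := by
        ext ⟨i, v⟩
        simp [ht, hW, Finset.mem_biUnion, Finset.mem_product]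
      have hsub : ∀ j ∈ s, L.get j ⊆ W := fun j hj v hv => Finset.mem_biUnion.2 ⟨j, hj, hv⟩
      have h1 : (s.val.map fun j => L.get j) ≤ E := by
        calc s.val.map (fun j => L.get j) ≤ Finset.univ.val.map (fun j => L.get j) :=
            Multiset.map_le_map (Finset.val_le_iff.mpr (Finset.subset_univ s))
          _ = E := hmapuniv
      have h2 : Multiset.filter (fun e => e ⊆ W) (s.val.map fun j => L.get j)
          = s.val.map fun j => L.get j := by
        refine Multiset.filter_eq_self.2 ?_
        intro e he
        rcases Multiset.mem_map.1 he with ⟨j, hj, rfl⟩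
        exact hsub j hj
      have hle : s.card ≤ spanCount E W := by
        calc s.card = Multiset.card (s.val.map fun j => L.get j) := by simp
          _ = Multiset.card (Multiset.filter (fun e => e ⊆ W) (s.val.map fun j => L.get j)) := by
              rw [h2]
          _ ≤ spanCount E W := Multiset.card_le_card (Multiset.filter_le_filter _ h1)
      have hW1 : 1 ≤ spanCount E W := le_trans hs.card_pos hle
      have hsparse := hsp W hW1
      rw [add_zero] at hsparse
      rw [hb, Finset.card_product, Finset.card_univ, Fintype.card_fin]
      calc s.card ≤ spanCount E W := hle
        _ ≤ k * W.card := hsparse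
    obtain ⟨m, minj, hm⟩ := (Finset.all_card_le_biUnion_card_iff_exists_injective t).1 hall
    have hbij : Function.Bijective m := by
      rw [Fintype.bijective_iff_injective_and_card]
      refine ⟨minj, ?_⟩
      simp [hlen, mul_comm]
    let e := Equiv.ofBijective m hbij
    have hme : ∀ p : Fin k × V, m (e.symm p) = p := fun p =>
      Equiv.ofBijective_apply_symm_apply m hbij p
    have hmem : ∀ (i : Fin k) (v : V), v ∈ L.get (e.symm (i, v)) := by
      intro i v
      have := hm (e.symm (i, v))
      rw [hme (i, v), ht] at this
      exact (Finset.mem_product.1 this).2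
    refine ⟨fun i => Multiset.map (fun v => L.get (e.symm (i, v))) Finset.univ.val, ?_, ?_⟩
    · have key : ∑ i : Fin k, Multiset.map (fun v => L.get (e.symm (i, v))) Finset.univ.val
          = Multiset.map (fun p : Fin k × V => L.get (e.symm p))
              (Finset.univ : Finset (Fin k × V)).val := by
        rw [← Finset.univ_product_univ, Finset.product_val]
        show _ = Multiset.map _ (Multiset.product _ _)
        rw [Multiset.product, Multiset.map_bind]
        rw [Finset.sum_eq_multiset_sum]
        simp [Multiset.bind, Multiset.join, Multiset.map_map, Function.comp]
      rw [key]
      have huniv : (Finset.univ : Finset (Fin k × V)).val.map ⇑e.symm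
          = (Finset.univ : Finset (Fin L.length)).val := by
        have h := congrArg Finset.val (Finset.map_univ_equiv e.symm)
        rwa [Finset.map_val, Equiv.coe_toEmbedding] at h
      calc Multiset.map (fun p : Fin k × V => L.get (e.symm p))
              (Finset.univ : Finset (Fin k × V)).val
          = Multiset.map (fun j : Fin L.length => L.get j)
              ((Finset.univ : Finset (Fin k × V)).val.map ⇑e.symm) := by
            rw [Multiset.map_map]; rfl
        _ = E := by rw [huniv]; exact hmapuniv
    · intro i
      exact ⟨fun v => L.get (e.symm (i, v)), hmem i, rfl⟩
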